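/- arXiv:1708.08633 — 2 statements merged into one kernel-verified Lean document; each statement's English description precedes it below -/
import Mathlib

section
/- There exists a 2×2 complex matrix T and complex numbers u, v with |u| ≤ 1, |v| ≤ 1 such that ‖[[v, v−u],[0,u]]‖ = 1 + √2; namely u = −1, v = 1 gives the matrix [[1,2],[0,−1]] of norm 1 + √2. -/
open Matrix

theorem stmt_10 :
    ∃ u v : ℂ, ‖u‖ ≤ 1 ∧ ‖v‖ ≤ 1 ∧ u = -1 ∧ v = 1 ∧
      ‖Matrix.toEuclideanCLM (𝕜 := ℂ) (n := Fin 2) !![v, v - u; 0, u]‖ = 1 + Real.sqrt 2 := by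
  refine ⟨-1, 1, by norm_num, by norm_num, rfl, rfl, ?_⟩
  have hA : !![(1:ℂ), 1 - -1; 0, -1] = !![1, 2; 0, -1] := by norm_num
  rw [hA]
  set T := Matrix.toEuclideanCLM (𝕜 := ℂ) (n := Fin 2) !![(1:ℂ), 2; 0, -1] with hT
  have hs2 : Real.sqrt 2 ^ 2 = 2 := Real.sq_sqrt (by norm_num)
  have hs2n : (0:ℝ) ≤ Real.sqrt 2 := Real.sqrt_nonneg 2
  have hcomp : ∀ x : EuclideanSpace ℂ (Fin 2),
      (T x) 0 = x 0 + 2 * x 1 ∧ (T x) 1 = - x 1 := by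
    intro x
    have hx : x = (WithLp.equiv 2 _).symm (WithLp.equiv 2 _ x) := rfl
    constructor <;>
    · rw [hT, hx, WithLp.equiv_symm_apply, Matrix.toEuclideanCLM_toLp]
      simp [Matrix.toLin'_apply, Matrix.mulVec, dotProduct, Fin.sum_univ_two]
  have hnorm : ∀ x : EuclideanSpace ℂ (Fin 2),
      ‖x‖ = Real.sqrt (‖x 0‖ ^ 2 + ‖x 1‖ ^ 2) := by
    intro x
    rw [EuclideanSpace.norm_eq, Fin.sum_univ_two]
  apply le_antisymm
  · apply ContinuousLinearMap.opNorm_le_bound _ (by positivity)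
    intro x
    obtain ⟨h0, h1⟩ := hcomp x
    rw [hnorm (T x), hnorm x, h0, h1]
    have key : ‖x 0 + 2 * x 1‖ ^ 2 + ‖-x 1‖ ^ 2 ≤
        ((1 + Real.sqrt 2) ^ 2) * (‖x 0‖ ^ 2 + ‖x 1‖ ^ 2) := by
      have htri : ‖x 0 + 2 * x 1‖ ≤ ‖x 0‖ + 2 * ‖x 1‖ := by
        calc ‖x 0 + 2 * x 1‖ ≤ ‖x 0‖ + ‖(2:ℂ) * x 1‖ := norm_add_le _ _
        _ = ‖x 0‖ + 2 * ‖x 1‖ := by rw [norm_mul]; norm_num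
      have ha : (0:ℝ) ≤ ‖x 0‖ := norm_nonneg _
      have hb : (0:ℝ) ≤ ‖x 1‖ := norm_nonneg _
      have hsq : ‖x 0 + 2 * x 1‖ ^ 2 ≤ (‖x 0‖ + 2 * ‖x 1‖) ^ 2 :=
        pow_le_pow_left₀ (norm_nonneg _) htri 2
      have hcert : (0:ℝ) ≤ (Real.sqrt 2 - 1) * ((1 + Real.sqrt 2) * ‖x 0‖ - ‖x 1‖) ^ 2 :=
        mul_nonneg (by nlinarith [hs2]) (sq_nonneg _)
      rw [norm_neg]
      have hs3 : Real.sqrt 2 ^ 3 = 2 * Real.sqrt 2 := by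
        rw [pow_succ, hs2]
      nlinarith [hcert, hs3, hs2]
    calc Real.sqrt (‖x 0 + 2 * x 1‖ ^ 2 + ‖-x 1‖ ^ 2)
        ≤ Real.sqrt (((1 + Real.sqrt 2) ^ 2) * (‖x 0‖ ^ 2 + ‖x 1‖ ^ 2)) :=
          Real.sqrt_le_sqrt key
      _ = (1 + Real.sqrt 2) * Real.sqrt (‖x 0‖ ^ 2 + ‖x 1‖ ^ 2) := by
          rw [Real.sqrt_mul (by positivity), Real.sqrt_sq (by positivity)]
  · -- lower bound via vector (1, 1+√2)
    set y : EuclideanSpace ℂ (Fin 2) :=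
      (WithLp.equiv 2 _).symm ![1, 1 + (Real.sqrt 2 : ℝ)] with hy
    have hy0 : y 0 = 1 := rfl
    have hy1 : y 1 = 1 + (Real.sqrt 2 : ℝ) := rfl
    have hny : ‖y‖ = Real.sqrt (4 + 2 * Real.sqrt 2) := by
      rw [hnorm y, hy0, hy1]
      have : ‖(1 + (Real.sqrt 2 : ℝ) : ℂ)‖ = 1 + Real.sqrt 2 := by
        rw [show ((1 + (Real.sqrt 2 : ℝ)) : ℂ) = ((1 + Real.sqrt 2 : ℝ) : ℂ) by push_cast; ring,
          Complex.norm_real, Real.norm_of_nonneg (by positivity)]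
      rw [this, norm_one,
        show (1:ℝ) ^ 2 + (1 + Real.sqrt 2) ^ 2 = 4 + 2 * Real.sqrt 2 by nlinarith [hs2]]
    obtain ⟨h0, h1⟩ := hcomp y
    have hnTy : ‖T y‖ = (1 + Real.sqrt 2) * Real.sqrt (4 + 2 * Real.sqrt 2) := by
      rw [hnorm (T y), h0, h1, hy0, hy1]
      have e0 : ‖(1:ℂ) + 2 * (1 + (Real.sqrt 2:ℝ))‖ = 3 + 2 * Real.sqrt 2 := by
        rw [show ((1:ℂ) + 2 * (1 + (Real.sqrt 2:ℝ))) = ((3 + 2 * Real.sqrt 2 : ℝ) : ℂ) by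
          push_cast; ring, Complex.norm_real, Real.norm_of_nonneg (by positivity)]
      have e1 : ‖-(((1 + (Real.sqrt 2:ℝ)) : ℂ))‖ = 1 + Real.sqrt 2 := by
        rw [norm_neg, show ((1 + (Real.sqrt 2 : ℝ)) : ℂ) = ((1 + Real.sqrt 2 : ℝ) : ℂ) by
          push_cast; ring, Complex.norm_real, Real.norm_of_nonneg (by positivity)]
      rw [e0, e1]
      rw [show (3 + 2 * Real.sqrt 2) ^ 2 + (1 + Real.sqrt 2) ^ 2
          = (1 + Real.sqrt 2) ^ 2 * (4 + 2 * Real.sqrt 2) by nlinarith [hs2]]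
      rw [Real.sqrt_mul (by positivity), Real.sqrt_sq (by positivity)]
    have hyne : Real.sqrt (4 + 2 * Real.sqrt 2) > 0 := Real.sqrt_pos.mpr (by positivity)
    have := T.le_opNorm y
    rw [hnTy, hny] at this
    exact le_of_mul_le_mul_right (by linarith) hyne
end

section
/- Let H be a Hilbert space and Φ : A → B(H) a bounded unital homomorphism from a unital Banach algebra A, with ‖Φ‖ = K. If for each f in the closed unit ball of A there is g in the closed unit ball with ‖Φ(f) + Φ(g)*‖ ≤ 2, then for every f ∈ A, ‖Φ(f)‖ ≤ (1+√2)‖f‖. -/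
set_option maxHeartbeats 1000000 in
theorem stmt_11 {A : Type*} [NormedRing A] [NormedAlgebra ℂ A] [NormOneClass A]
    {H : Type*} [NormedAddCommGroup H] [InnerProductSpace ℂ H] [CompleteSpace H]
    (Φ : A →L[ℂ] (H →L[ℂ] H))
    (hmul : ∀ a b : A, Φ (a * b) = Φ a * Φ b)
    (hone : Φ 1 = 1)
    (h : ∀ f : A, ‖f‖ ≤ 1 → ∃ g : A, ‖g‖ ≤ 1 ∧
      ‖Φ f + ContinuousLinearMap.adjoint (Φ g)‖ ≤ 2) :
    ∀ f : A, ‖Φ f‖ ≤ (1 + Real.sqrt 2) * ‖f‖ := by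
  set M := ‖Φ‖ with hM
  have hM0 : 0 ≤ M := norm_nonneg _
  have hc1 : (1:ℝ) ≤ 2*M+1 := by linarith
  have hc0 : (0:ℝ) < 2*M+1 := by linarith
  -- Step 1 : for f in the unit ball, ‖Φ f‖^2 ≤ 2M+1
  have step1 : ∀ f : A, ‖f‖ ≤ 1 → ‖Φ f‖^2 ≤ 2*M+1 := by
    intro f hf
    obtain ⟨g, hg, hE⟩ := h f hf
    set T := Φ f with hT
    set S := Φ g with hS
    set E := T + ContinuousLinearMap.adjoint S with hEdef
    have hEn : ‖E‖ ≤ 2 := hE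
    set X := star T * T with hX
    have hstarE : star E = star T + S := by
      rw [hEdef, star_add, ← ContinuousLinearMap.star_eq_adjoint, star_star]
    have hXid : X = star E * Φ f - Φ g * Φ f := by
      rw [hstarE, add_mul, ← hT, ← hS, hX]
      abel
    -- key induction
    have key : ∀ n : ℕ, ∀ a : A, ‖a‖ ≤ 1 → ‖Φ a * X^n‖ ≤ M * (2*M+1)^n := by
      intro n
      induction n with
      | zero =>
        intro a ha
        have := Φ.le_opNorm a
        simp only [pow_zero, mul_one]
        nlinarith [norm_nonneg (Φ a)]
      | succ n ih =>
        intro a ha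
        have hgf : ‖a * (g * f)‖ ≤ 1 := by
          have h1 : ‖g * f‖ ≤ 1 := by
            calc ‖g * f‖ ≤ ‖g‖ * ‖f‖ := norm_mul_le _ _
              _ ≤ 1 := by nlinarith [norm_nonneg g, norm_nonneg f,
                  mul_le_mul_of_nonneg_right hg (norm_nonneg f)]
          calc ‖a * (g * f)‖ ≤ ‖a‖ * ‖g * f‖ := norm_mul_le _ _
            _ ≤ 1 := by nlinarith [norm_nonneg a, norm_nonneg (g*f),
                mul_le_mul_of_nonneg_right ha (norm_nonneg (g*f))]
        have expand : Φ a * X^(n+1)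
            = (Φ a * star E) * (Φ f * X^n) - Φ (a * (g * f)) * X^n := by
          rw [pow_succ', hXid, hmul, hmul]
          noncomm_ring
        have h1 : ‖(Φ a * star E) * (Φ f * X^n)‖ ≤ (2*M) * (M * (2*M+1)^n) := by
          have ha1 : ‖Φ a‖ ≤ M := by
            have := Φ.le_opNorm a
            nlinarith
          have hb1 : ‖Φ a * star E‖ ≤ 2*M := by
            calc ‖Φ a * star E‖ ≤ ‖Φ a‖ * ‖star E‖ := norm_mul_le _ _
              _ = ‖Φ a‖ * ‖E‖ := by rw [norm_star]
              _ ≤ M * 2 := by nlinarith [norm_nonneg E, norm_nonneg (Φ a)]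
              _ = 2*M := by ring
          calc ‖(Φ a * star E) * (Φ f * X^n)‖
              ≤ ‖Φ a * star E‖ * ‖Φ f * X^n‖ := norm_mul_le _ _
            _ ≤ (2*M) * (M * (2*M+1)^n) := by
                have h2 := ih f hf
                have h3 : (0:ℝ) ≤ ‖Φ f * X^n‖ := norm_nonneg _
                have h4 : (0:ℝ) ≤ ‖Φ a * star E‖ := norm_nonneg _
                nlinarith
        have h5 := ih (a * (g * f)) hgf
        calc ‖Φ a * X^(n+1)‖
            = ‖(Φ a * star E) * (Φ f * X^n) - Φ (a * (g * f)) * X^n‖ := by rw [expand]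
          _ ≤ ‖(Φ a * star E) * (Φ f * X^n)‖ + ‖Φ (a * (g * f)) * X^n‖ := norm_sub_le _ _
          _ ≤ (2*M) * (M * (2*M+1)^n) + M * (2*M+1)^n := by linarith
          _ = M * (2*M+1)^(n+1) := by ring
    have hpow : ∀ n : ℕ, ‖X^n‖ ≤ M * (2*M+1)^n := by
      intro n
      have := key n 1 (by simp)
      rwa [hone, one_mul] at this
    -- selfadjointness and norms of powers
    have hsa : star X = X := by
      rw [hX, star_mul, star_star]
    have hXnorm : ∀ k : ℕ, ‖X^(2^k)‖ = ‖X‖^(2^k) := by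
      intro k
      induction k with
      | zero => simp
      | succ k ih =>
        have h2 : X^(2^(k+1)) = X^(2^k) * X^(2^k) := by
          rw [← pow_add]
          congr 1
          ring
        have hstar : star (X^(2^k)) = X^(2^k) := by rw [star_pow, hsa]
        calc ‖X^(2^(k+1))‖ = ‖X^(2^k) * X^(2^k)‖ := by rw [h2]
          _ = ‖star (X^(2^k)) * X^(2^k)‖ := by rw [hstar]
          _ = ‖X^(2^k)‖ * ‖X^(2^k)‖ := CStarRing.norm_star_mul_self
          _ = ‖X‖^(2^k) * ‖X‖^(2^k) := by rw [ih]
          _ = ‖X‖^(2^(k+1)) := by rw [← pow_add]; congr 1; ring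
    have hXle : ‖X‖ ≤ 2*M+1 := by
      by_contra hcon
      push_neg at hcon
      set r := ‖X‖ / (2*M+1) with hr
      have hr1 : 1 < r := (one_lt_div hc0).mpr hcon
      obtain ⟨n, hn⟩ := pow_unbounded_of_one_lt M hr1
      have hXn := hpow (2^n)
      rw [hXnorm n] at hXn
      have hXc : ‖X‖ = r * (2*M+1) := by
        rw [hr]; field_simp
      rw [hXc, mul_pow] at hXn
      have h3 : r^(2^n) ≤ M :=
        le_of_mul_le_mul_right hXn (pow_pos hc0 _)
      have h4 : r^n ≤ r^(2^n) :=
        pow_le_pow_right₀ hr1.le (Nat.le_of_lt (Nat.lt_two_pow_self (n := n)))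
      linarith
    have hXeq : ‖X‖ = ‖Φ f‖ * ‖Φ f‖ := by
      rw [hX, ← hT]; exact CStarRing.norm_star_mul_self
    calc ‖Φ f‖^2 = ‖X‖ := by rw [hXeq, sq]
      _ ≤ 2*M+1 := hXle
  -- Step 2 : M^2 ≤ 2M+1
  have hop : M ≤ Real.sqrt (2*M+1) := by
    rw [hM]
    apply ContinuousLinearMap.opNorm_le_bound _ (Real.sqrt_nonneg _)
    intro f
    rcases eq_or_ne f 0 with h0 | h0
    · rw [h0, map_zero, norm_zero, norm_zero, mul_zero]
    · have hfpos : 0 < ‖f‖ := norm_pos_iff.mpr h0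
      set u := ((‖f‖⁻¹ : ℝ) : ℂ) • f with hu
      have hun : ‖u‖ ≤ 1 := by
        rw [hu, norm_smul]
        simp only [Complex.norm_real, Real.norm_eq_abs,
          abs_of_nonneg (le_of_lt (inv_pos.mpr hfpos))]
        exact le_of_eq (inv_mul_cancel₀ (ne_of_gt hfpos))
      have h1 := step1 u hun
      have h2 : ‖Φ u‖ ≤ Real.sqrt (2*M+1) := by
        rw [← Real.sqrt_sq (norm_nonneg (Φ u))]
        exact Real.sqrt_le_sqrt h1
      have h3 : Φ u = ((‖f‖⁻¹ : ℝ) : ℂ) • Φ f := by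
        rw [hu, map_smul]
      have h4 : ‖Φ u‖ = ‖f‖⁻¹ * ‖Φ f‖ := by
        rw [h3, norm_smul]
        simp [abs_of_nonneg (le_of_lt (inv_pos.mpr hfpos))]
      rw [h4] at h2
      calc ‖Φ f‖ = ‖f‖ * (‖f‖⁻¹ * ‖Φ f‖) := by field_simp
        _ ≤ ‖f‖ * Real.sqrt (2*M+1) := by
            nlinarith [h2, hfpos]
        _ = Real.sqrt (2*M+1) * ‖f‖ := by ring
  have hM2 : M^2 ≤ 2*M+1 := by
    have hs := Real.sq_sqrt (le_of_lt hc0)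
    nlinarith [hop, Real.sqrt_nonneg (2*M+1)]
  have hMfin : M ≤ 1 + Real.sqrt 2 := by
    nlinarith [Real.sq_sqrt (by norm_num : (0:ℝ) ≤ 2), Real.sqrt_nonneg 2,
      sq_nonneg (M - 1 - Real.sqrt 2)]
  intro f
  calc ‖Φ f‖ ≤ M * ‖f‖ := Φ.le_opNorm f
    _ ≤ (1 + Real.sqrt 2) * ‖f‖ :=
        mul_le_mul_of_nonneg_right hMfin (norm_nonneg f)
end
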